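/- arXiv:math/9404226 — 5 statements merged into one kernel-verified Lean document; each statement's English description precedes it below -/
import Mathlib

section
/- Let (A_i)_{i∈κ} be a family of Boolean algebras, D an ultrafilter on κ, and A = ∏_{i∈κ} A_i / D the Boolean ultraproduct. Then the algebraic density π(A) is at most the cardinality of the ultraproduct ∏_{i∈κ} π(A_i) / D of the cardinals π(A_i). -/
open Cardinal

universe u v

/-- The algebraic density `π A` of a Boolean algebra: the least cardinality of a
dense subset of `A \ {⊥}`. -/
noncomputable def piDensity (A : Type v) [BooleanAlgebra A] : Cardinal.{v} :=
  sInf {c | ∃ X : Set A, (∀ x ∈ X, x ≠ ⊥) ∧ (∀ a : A, a ≠ ⊥ → ∃ x ∈ X, x ≤ a) ∧ c = #X}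

section BUP

variable {ι : Type u} (D : Ultrafilter ι) (A : ι → Type u) [∀ i, BooleanAlgebra (A i)]

instance piBooleanRing : BooleanRing (∀ i, AsBoolRing (A i)) :=
  { Pi.ring with isIdempotentElem := fun f => funext fun i => BooleanRing.mul_self (f i) }

/-- The ideal of elements vanishing `D`-almost everywhere. -/
def upIdeal : Ideal (∀ i, AsBoolRing (A i)) where
  carrier := {f | {i | f i = 0} ∈ D}
  zero_mem' := by
    have : {i | (0 : ∀ i, AsBoolRing (A i)) i = 0} = Set.univ := by ext i; simp
    simp only [Set.mem_setOf_eq] at *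
    exact this ▸ Filter.univ_mem
  add_mem' := by
    intro f g hf hg
    filter_upwards [hf, hg] with i h1 h2
    simp only [Pi.add_apply, h1, h2, add_zero]
  smul_mem' := by
    intro c f hf
    filter_upwards [hf] with i h1
    simp only [smul_eq_mul, Pi.mul_apply, h1, mul_zero]

instance upQuotBooleanRing : BooleanRing ((∀ i, AsBoolRing (A i)) ⧸ upIdeal D A) :=
  { (inferInstance : CommRing ((∀ i, AsBoolRing (A i)) ⧸ upIdeal D A)) with
    isIdempotentElem := fun a => by
      obtain ⟨f, rfl⟩ := Ideal.Quotient.mk_surjective a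
      rw [IsIdempotentElem, ← map_mul, BooleanRing.mul_self] }

/-- The Boolean ultraproduct `∏ᵢ Aᵢ / D`. -/
def BUP : Type u := AsBoolAlg ((∀ i, AsBoolRing (A i)) ⧸ upIdeal D A)

noncomputable instance : BooleanAlgebra (BUP D A) :=
  inferInstanceAs (BooleanAlgebra (AsBoolAlg _))

end BUP

section cardUP

variable {ι : Type u} (D : Ultrafilter ι)

/-- Set-theoretic ultraproduct of a family of cardinals, seen as the quotient of the
product of the corresponding sets of ordinals by `D`-almost-everywhere equality. -/
def cardSetoid (lam : ι → Cardinal.{u}) :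
    Setoid (∀ i, (lam i).ord.ToType) where
  r f g := {i | f i = g i} ∈ D
  iseqv := by
    refine ⟨fun f => by
      have : {i | f i = f i} = Set.univ := by ext i; simp
      rw [this]; exact Filter.univ_mem, fun {f g} h => ?_, fun {f g h} h1 h2 => ?_⟩
    · filter_upwards [h] with i hi using hi.symm
    · filter_upwards [h1, h2] with i hi1 hi2 using hi1.trans hi2

/-- The cardinality of the ultraproduct `∏ᵢ λᵢ / D` of a family of cardinals. -/
noncomputable def cardUP (lam : ι → Cardinal.{u}) : Cardinal.{u} :=
  #(Quotient (cardSetoid D lam))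

end cardUP

/-- Problem 12, easy inequality: the algebraic density of a Boolean ultraproduct is at
most the cardinality of the ultraproduct of the algebraic densities. -/
theorem piDensity_ultraproduct_le {ι : Type u} (D : Ultrafilter ι) (A : ι → Type u)
    [∀ i, BooleanAlgebra (A i)] [∀ i, Infinite (A i)] :
    piDensity (BUP D A) ≤ cardUP D (fun i => piDensity (A i)) := by
  classical
  -- for each i, pick a dense set realizing the density
  have hne : ∀ i, {c | ∃ X : Set (A i), (∀ x ∈ X, x ≠ ⊥) ∧
      (∀ a : A i, a ≠ ⊥ → ∃ x ∈ X, x ≤ a) ∧ c = #X}.Nonempty := by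
    intro i
    exact ⟨#{a : A i | a ≠ ⊥}, {a | a ≠ ⊥}, fun x hx => hx,
      fun a ha => ⟨a, ha, le_rfl⟩, rfl⟩
  have hmem : ∀ i, piDensity (A i) ∈ {c | ∃ X : Set (A i), (∀ x ∈ X, x ≠ ⊥) ∧
      (∀ a : A i, a ≠ ⊥ → ∃ x ∈ X, x ≤ a) ∧ c = #X} := fun i => csInf_mem (hne i)
  choose X hXne hXdense hXcard using hmem
  -- equivalences between ordinal representatives and the dense sets
  have hcard : ∀ i, #((piDensity (A i)).ord.ToType) = #(X i) := by
    intro i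
    rw [Cardinal.mk_toType, Cardinal.card_ord, hXcard i]
  have he : ∀ i, Nonempty ((piDensity (A i)).ord.ToType ≃ X i) :=
    fun i => Cardinal.eq.1 (hcard i)
  let e : ∀ i, (piDensity (A i)).ord.ToType ≃ X i := fun i => Classical.choice (he i)
  -- the map from the cardinal ultraproduct to the Boolean ultraproduct
  let vec : (∀ i, (piDensity (A i)).ord.ToType) → (∀ i, AsBoolRing (A i)) :=
    fun f i => toBoolRing ((e i (f i) : A i))
  let F : Quotient (cardSetoid D (fun i => piDensity (A i))) → BUP D A :=
    Quotient.lift (fun f => toBoolAlg (Ideal.Quotient.mk (upIdeal D A) (vec f))) (by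
      intro f g hfg
      show (toBoolAlg (Ideal.Quotient.mk (upIdeal D A) (vec f)) : AsBoolAlg _) =
        toBoolAlg (Ideal.Quotient.mk (upIdeal D A) (vec g))
      congr 1
      rw [Ideal.Quotient.eq]
      show {i | (vec f - vec g) i = 0} ∈ D
      filter_upwards [hfg] with i hi
      simp only [vec, Pi.sub_apply, Set.mem_setOf_eq, hi, sub_self])
  refine le_trans (csInf_le' ⟨Set.range F, ?_, ?_, rfl⟩) Cardinal.mk_range_le
  · -- elements of the range are nonzero
    rintro x ⟨q, rfl⟩
    obtain ⟨f, rfl⟩ := Quotient.exists_rep q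
    intro hbot
    have hbot2 : Ideal.Quotient.mk (upIdeal D A) (vec f) = 0 := hbot
    rw [Ideal.Quotient.eq_zero_iff_mem] at hbot2
    have : {i | vec f i = 0} = (∅ : Set ι) := by
      ext i
      simp only [Set.mem_setOf_eq, Set.mem_empty_iff_false, iff_false]
      intro h0
      exact hXne i _ (e i (f i)).2 (by
        have := congrArg ofBoolRing h0
        rwa [ofBoolRing_toBoolRing, ofBoolRing_zero] at this)
    have hbot3 : {i | vec f i = 0} ∈ D := hbot2
    rw [this] at hbot3
    exact D.empty_notMem hbot3
  · -- density
    intro a ha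
    obtain ⟨g, hg⟩ := Ideal.Quotient.mk_surjective (ofBoolAlg a)
    have hS : {i | ofBoolRing (g i) ≠ ⊥} ∈ D := by
      by_contra h
      rw [← Ultrafilter.compl_mem_iff_notMem] at h
      apply ha
      have hg0 : g ∈ upIdeal D A := by
        show {i | g i = 0} ∈ D
        filter_upwards [h] with i hi
        simp only [Set.mem_compl_iff, Set.mem_setOf_eq, not_not] at hi
        have := congrArg toBoolRing hi
        rwa [toBoolRing_ofBoolRing, toBoolRing_bot] at this
      have : ofBoolAlg a = 0 := by
        rw [← hg, Ideal.Quotient.eq_zero_iff_mem]; exact hg0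
      calc (show AsBoolAlg ((∀ i, AsBoolRing (A i)) ⧸ upIdeal D A) from a) = toBoolAlg (ofBoolAlg a) := (toBoolAlg_ofBoolAlg a).symm
        _ = toBoolAlg 0 := by rw [this]
        _ = ⊥ := rfl
    -- choose witnesses below `g i`
    haveI hnonempty : ∀ i, Nonempty ((piDensity (A i)).ord.ToType) := by
      intro i
      have : (⊤ : A i) ≠ ⊥ := top_ne_bot
      obtain ⟨x, hx, -⟩ := hXdense i ⊤ this
      exact ⟨(e i).symm ⟨x, hx⟩⟩
    let f : ∀ i, (piDensity (A i)).ord.ToType := fun i =>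
      if h : ofBoolRing (g i) ≠ ⊥ then
        (e i).symm ⟨(hXdense i _ h).choose, (hXdense i _ h).choose_spec.1⟩
      else Classical.arbitrary _
    refine ⟨F ⟦f⟧, ⟨⟦f⟧, rfl⟩, ?_⟩
    show toBoolAlg (Ideal.Quotient.mk (upIdeal D A) (vec f)) ≤ a
    rw [← toBoolAlg_ofBoolAlg a, ← ofBoolAlg_mul_ofBoolAlg_eq_left_iff,
      ofBoolAlg_toBoolAlg, ofBoolAlg_toBoolAlg, ← hg, ← map_mul, Ideal.Quotient.eq]
    show {i | (vec f * g - vec f) i = 0} ∈ D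
    filter_upwards [hS] with i hi
    simp only [Pi.sub_apply, Pi.mul_apply, Set.mem_setOf_eq, sub_eq_zero]
    have hle : ((e i (f i) : A i)) ≤ ofBoolRing (g i) := by
      simp only [f, dif_pos hi, Equiv.apply_symm_apply]
      exact (hXdense i _ hi).choose_spec.2
    have : vec f i * g i = vec f i := by
      have h1 : ofBoolRing (vec f i * g i) = ofBoolRing (vec f i) := by
        rw [ofBoolRing_mul]
        show ofBoolRing (toBoolRing _) ⊓ _ = ofBoolRing (toBoolRing _)
        rw [ofBoolRing_toBoolRing]
        exact inf_of_le_left hle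
      exact ofBoolRing_inj.mp h1
    exact this
end

section
/- Let (A_i)_{i∈κ} be infinite Boolean algebras, D an ultrafilter on κ, λ_i = π(A_i) for each i, and suppose λ is a cardinal with λ_i ≤ λ for all i. If the ultraproduct A = ∏ A_i / D satisfies π(A) = λ, then every element f/D of the ultraproduct ∏_{i∈κ} λ_i / D is bounded below λ modulo D, i.e., there is α < λ with {i : f(i) ≤ α} ∈ D. -/
open Cardinal

universe u v

/-- If a set of nonzero elements has cardinality less than the algebraic density, it is not
dense, i.e. some nonzero element avoids it. -/
theorem exists_avoid {B : Type v} [BooleanAlgebra B] (S : Set B) (hS : ∀ s ∈ S, s ≠ ⊥)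
    (hcard : #S < piDensity B) : ∃ c : B, c ≠ ⊥ ∧ ∀ s ∈ S, ¬ s ≤ c := by
  by_contra h
  push_neg at h
  have : piDensity B ≤ #S :=
    csInf_le' ⟨S, hS, fun a ha => h a ha, rfl⟩
  exact hcard.not_ge this

/-- Claim 4 of Theorem 1.1: if `π (∏ Aᵢ / D) = lam` where `π Aᵢ ≤ lam` for all `i`, then
every `f ∈ ∏ᵢ π(Aᵢ)` is bounded below `lam` modulo `D`. -/
theorem bounded_of_piDensity_eq {ι : Type u} (D : Ultrafilter ι) (A : ι → Type u)
    [∀ i, BooleanAlgebra (A i)] [∀ i, Infinite (A i)] (lam : Cardinal.{u})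
    (hle : ∀ i, piDensity (A i) ≤ lam)
    (hpi : piDensity (BUP D A) = lam) :
    ∀ f : ι → Ordinal.{u}, (∀ i, f i < (piDensity (A i)).ord) →
      ∃ α < lam.ord, {i | f i ≤ α} ∈ D := by
  intro f hf
  classical
  haveI : ∀ i, Nontrivial (AsBoolRing (A i)) := fun i => inferInstanceAs (Nontrivial (A i))
  -- obtain a dense set `X` of cardinality `lam`
  have hSne : Set.Nonempty {c | ∃ X : Set (BUP D A), (∀ x ∈ X, x ≠ ⊥) ∧
      (∀ a : BUP D A, a ≠ ⊥ → ∃ x ∈ X, x ≤ a) ∧ c = #X} :=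
    ⟨#{a : BUP D A | a ≠ ⊥}, {a : BUP D A | a ≠ ⊥}, fun x hx => hx,
      fun a ha => ⟨a, ha, le_rfl⟩, rfl⟩
  have hmem : piDensity (BUP D A) ∈ {c | ∃ X : Set (BUP D A), (∀ x ∈ X, x ≠ ⊥) ∧
      (∀ a : BUP D A, a ≠ ⊥ → ∃ x ∈ X, x ≤ a) ∧ c = #X} := csInf_mem hSne
  obtain ⟨X, hX0, hXd, hXc⟩ := hmem
  rw [hpi] at hXc
  -- choose representatives for elements of `X`, nonzero in every coordinate
  have hrep : ∀ x : ↥X, ∃ r : ∀ i, AsBoolRing (A i),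
      (∀ i, r i ≠ 0) ∧ Ideal.Quotient.mk (upIdeal D A) r = ofBoolAlg x.1 := by
    rintro ⟨x, hx⟩
    obtain ⟨g, hg⟩ := Ideal.Quotient.mk_surjective (ofBoolAlg x)
    have hxne : {i | g i = 0} ∉ D := by
      intro hD
      have h0 : Ideal.Quotient.mk (upIdeal D A) g = 0 :=
        Ideal.Quotient.eq_zero_iff_mem.mpr hD
      rw [h0] at hg
      exact hX0 x hx (ofBoolAlg.injective (hg.symm.trans (ofBoolAlg_bot (α := _)).symm))
    refine ⟨fun i => if g i = 0 then 1 else g i, fun i => ?_, ?_⟩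
    · by_cases hgi : g i = 0 <;> simp [hgi]
    · rw [← hg]
      refine (Ideal.Quotient.eq).mpr ?_
      have hsub : {i | g i ≠ 0} ⊆
          {i | ((fun i => if g i = 0 then 1 else g i) - g) i = 0} := by
        intro i hi
        simp only [Set.mem_setOf_eq] at hi ⊢
        simp [hi]
      exact Filter.mem_of_superset (Ultrafilter.compl_mem_iff_notMem.mpr hxne) hsub
  choose r hr0 hrmk using hrep
  -- enumerate `X` by ordinals below `lam.ord`
  have hcard : #(↥X) = #(lam.ord.ToType) := by
    rw [Cardinal.mk_toType, Cardinal.card_ord, ← hXc]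
  haveI : IsWellOrder lam.ord.ToType (· < ·) := isWellOrder_lt
  let e : ↥X ≃ lam.ord.ToType := Classical.choice (Cardinal.eq.mp hcard)
  let o : ↥X → Ordinal.{u} := fun x => Ordinal.typein (α := lam.ord.ToType) (· < ·) (e x)
  have ho_lt : ∀ x, o x < lam.ord := fun x => Ordinal.typein_lt_self (e x)
  have ho_inj : Function.Injective o := fun a b hab =>
    e.injective (Ordinal.typein_injective _ hab)
  -- the initial segments of `X` along `f` are small, hence avoidable
  have hSi : ∀ i, #{x : ↥X // o x < f i} < piDensity (A i) := by
    intro i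
    haveI : IsWellOrder (f i).ToType (· < ·) := isWellOrder_lt
    have h2 : #{x : ↥X // o x < f i} ≤ (f i).card := by
      rw [← Cardinal.mk_toType]
      refine Cardinal.mk_le_of_injective
        (f := fun x => Ordinal.enum (α := (f i).ToType) (· < ·)
          ⟨o x.1, by rw [Ordinal.type_toType]; exact x.2⟩) ?_
      intro a b hab
      have := Subtype.ext_iff.mp (Ordinal.enum_inj.mp hab)
      exact Subtype.ext (ho_inj this)
    exact h2.trans_lt (Cardinal.lt_ord.mp (hf i))
  have havoid : ∀ i, ∃ c : A i, c ≠ ⊥ ∧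
      ∀ x : ↥X, o x < f i → ¬ (ofBoolRing (r x i) ≤ c) := by
    intro i
    have hne : ∀ s ∈ (Set.range fun x : {x : ↥X // o x < f i} => ofBoolRing (r x.1 i)),
        s ≠ ⊥ := by
      rintro s ⟨x, rfl⟩ hbot
      exact hr0 x.1 i (ofBoolRing.injective
        (hbot.trans (ofBoolRing_zero (α := A i)).symm))
    have hlt : #(Set.range fun x : {x : ↥X // o x < f i} => ofBoolRing (r x.1 i)) <
        piDensity (A i) := Cardinal.mk_range_le.trans_lt (hSi i)
    obtain ⟨c, hcb, hcs⟩ := exists_avoid _ hne hlt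
    exact ⟨c, hcb, fun x hx hle' => hcs _ ⟨⟨x, hx⟩, rfl⟩ hle'⟩
  choose c hc1 hc2 using havoid
  -- the avoiding element in the ultraproduct
  set cc : ∀ i, AsBoolRing (A i) := fun i => toBoolRing (c i) with hcc
  have hccne : toBoolAlg (Ideal.Quotient.mk (upIdeal D A) cc) ≠ ⊥ := by
    intro h
    have h0 : Ideal.Quotient.mk (upIdeal D A) cc = 0 := by
      have := congrArg ofBoolAlg h
      rwa [ofBoolAlg_toBoolAlg, ofBoolAlg_bot] at this
    have hD : {i | cc i = 0} ∈ D := Ideal.Quotient.eq_zero_iff_mem.mp h0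
    have : {i | cc i = 0} = (∅ : Set ι) := by
      ext i
      simp only [Set.mem_setOf_eq, Set.mem_empty_iff_false, iff_false]
      intro h1
      exact hc1 i (toBoolRing.injective
        (show toBoolRing (c i) = toBoolRing ⊥ from h1.trans (toBoolRing_bot (α := A i)).symm))
    rw [this] at hD
    exact Filter.empty_notMem (D : Filter ι) hD
  obtain ⟨x, hxX, hxle⟩ := hXd _ hccne
  set x' : ↥X := ⟨x, hxX⟩ with hx'
  -- translate `x ≤ [cc]` to a pointwise statement
  have hxle' : toBoolAlg (Ideal.Quotient.mk (upIdeal D A) (r x')) ≤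
      toBoolAlg (Ideal.Quotient.mk (upIdeal D A) cc) := by
    rw [hrmk x']
    exact hxle
  have hDle : {i | ofBoolRing (r x' i) ≤ c i} ∈ D := by
    have h1 : toBoolAlg (Ideal.Quotient.mk (upIdeal D A) (r x')) ⊓
        toBoolAlg (Ideal.Quotient.mk (upIdeal D A) cc) =
        toBoolAlg (Ideal.Quotient.mk (upIdeal D A) (r x')) := inf_eq_left.mpr hxle'
    rw [← toBoolAlg_mul, ← map_mul] at h1
    have h2 : r x' * cc - r x' ∈ upIdeal D A :=
      (Ideal.Quotient.eq).mp (toBoolAlg.injective h1)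
    have h3 : {i | (r x' * cc - r x') i = 0} ∈ D := h2
    filter_upwards [h3] with i hi
    have h4 : r x' i * cc i = r x' i := by
      have : r x' i * cc i - r x' i = 0 := hi
      rwa [sub_eq_zero] at this
    have h5 := congrArg ofBoolRing h4
    rw [ofBoolRing_mul] at h5
    have h6 : ofBoolRing (cc i) = c i := rfl
    rw [h6] at h5
    exact inf_eq_left.mp h5
  refine ⟨o x', ho_lt x', ?_⟩
  filter_upwards [hDle] with i hi
  by_contra hfo
  exact hc2 i x' (not_le.mp hfo) hi
end

section
/- Let Fr(w) be the free Boolean algebra on generators {u_i : i ∈ w}, let E be a set of finite partial functions e : w ⇀ {0,1}, let q_e = ∏_{e(i)=1} u_i · ∏_{e(i)=0} ¬u_i, let N be the ideal generated by {q_e : e ∈ E}, and let x_i denote the image of u_i in Fr(w)/N. Then for any total function g : w → {0,1}, the set {x_i : g(i)=1} ∪ {¬x_i : g(i)=0} has the finite intersection property in Fr(w)/N (and hence extends to an ultrafilter) if and only if no e ∈ E is extended by g. -/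
/-- The elements of the Boolean subalgebra generated by a set `S`
(closure under `⊥`, `⊔` and complementation). -/
inductive BAGen {α : Type v} [BooleanAlgebra α] (S : Set α) : α → Prop
  | base {a : α} : a ∈ S → BAGen S a
  | bot : BAGen S ⊥
  | sup {a b : α} : BAGen S a → BAGen S b → BAGen S (a ⊔ b)
  | compl {a : α} : BAGen S a → BAGen S aᶜ

/-- Remark 3.1: Let `Fr` be the free Boolean algebra on independent generators
`u i`, `i ∈ w`, `E` a set of finite partial functions `w ⇀ Bool` (coded as pairs of a
finite domain and a value function), and `c : Fr → Q` the quotient map by the ideal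
generated by the elementary products `q_e`, `e ∈ E`. Then for a total `g : w → Bool`,
the family `{x i : g i = 1} ∪ {(x i)ᶜ : g i = 0}` (where `x i = c (u i)`) has the finite
intersection property iff no `e ∈ E` is extended by `g`. -/
theorem fip_iff_no_extension {w Fr Q : Type u} [BooleanAlgebra Fr] [BooleanAlgebra Q]
    (u : w → Fr)
    (hind : ∀ s t : Finset w, (∀ i ∈ s, i ∉ t) →
      s.inf u ⊓ t.inf (fun i => (u i)ᶜ) ≠ ⊥)
    (hgen : ∀ a : Fr, BAGen (Set.range u) a)
    (E : Set (Finset w × (w → Bool)))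
    (c : BoundedLatticeHom Fr Q) (hsurj : Function.Surjective c)
    (hker : ∀ a : Fr, c a = ⊥ ↔ ∃ F : Finset (Finset w × (w → Bool)), ↑F ⊆ E ∧
      a ≤ F.sup (fun e => e.1.inf (fun i => if e.2 i then u i else (u i)ᶜ)))
    (g : w → Bool) :
    (∀ s : Finset w, s.inf (fun i => if g i then c (u i) else (c (u i))ᶜ) ≠ ⊥) ↔
      ¬ ∃ e ∈ E, ∀ i ∈ e.1, g i = e.2 i := by
  classical
  set q : Finset w × (w → Bool) → Fr :=
    fun e => e.1.inf (fun i => if e.2 i then u i else (u i)ᶜ) with hq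
  set P : Finset w → Fr := fun s => s.inf (fun i => if g i then u i else (u i)ᶜ) with hP
  have hPmap : ∀ s : Finset w,
      c (P s) = s.inf (fun i => if g i then c (u i) else (c (u i))ᶜ) := by
    intro s
    rw [hP, map_finset_inf]
    refine Finset.inf_congr rfl fun i _ => ?_
    by_cases h : g i <;> simp [h, map_compl']
  constructor
  · rintro hfip ⟨e, heE, hext⟩
    apply hfip e.1
    have h1 : e.1.inf (fun i => if g i then c (u i) else (c (u i))ᶜ) = c (q e) := by
      rw [hq, map_finset_inf]
      refine Finset.inf_congr rfl fun i hi => ?_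
      rw [hext i hi]
      by_cases h : e.2 i <;> simp [h, map_compl']
    rw [h1, hker]
    exact ⟨{e}, by simpa using heE, by simp⟩
  · intro hno s hbot
    push_neg at hno
    rw [← hPmap, hker] at hbot
    obtain ⟨F, hFE, hle⟩ := hbot
    set s' : Finset w := s ∪ F.sup (fun e => e.1) with hs'
    have hle' : P s' ≤ F.sup q :=
      le_trans (Finset.inf_mono Finset.subset_union_left) hle
    have hbot' : P s' = ⊥ := by
      have h3 : P s' = P s' ⊓ F.sup q := (inf_eq_left.mpr hle').symm
      rw [h3, Finset.sup_inf_distrib_left]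
      refine le_bot_iff.mp (Finset.sup_le fun e heF => ?_)
      obtain ⟨i, hi, hne⟩ := hno e (hFE heF)
      have hsub : e.1 ⊆ F.sup (fun e => e.1) := Finset.le_sup heF
      have his' : i ∈ s' := Finset.mem_union_right _ (hsub hi)
      have h4 : P s' ⊓ q e ≤
          (if g i then u i else (u i)ᶜ) ⊓ (if e.2 i then u i else (u i)ᶜ) :=
        inf_le_inf (Finset.inf_le his') (Finset.inf_le hi)
      refine le_trans h4 ?_
      cases hg : g i <;> cases he : e.2 i
      · exact absurd (hg.trans he.symm) hne
      · simp
      · simp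
      · exact absurd (hg.trans he.symm) hne
    have hdisj : ∀ i ∈ s'.filter (fun i => g i = true),
        i ∉ s'.filter (fun i => ¬ g i = true) := by
      intro i hi hit
      simp only [Finset.mem_filter] at hi hit
      exact hit.2 hi.2
    have hsplit : ∀ t : Finset w, P t = (t.filter (fun i => g i = true)).inf u ⊓
        (t.filter (fun i => ¬ g i = true)).inf (fun i => (u i)ᶜ) := by
      intro t
      simp only [hP]
      conv_lhs => rw [← Finset.filter_union_filter_not_eq (fun i => g i = true) t]
      rw [Finset.inf_union]
      congr 1
      · refine Finset.inf_congr rfl fun i hi => ?_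
        simp only [Finset.mem_filter] at hi
        simp [hi.2]
      · refine Finset.inf_congr rfl fun i hi => ?_
        simp only [Finset.mem_filter] at hi
        simp [hi.2]
    exact hind _ _ hdisj (by rw [← hsplit s']; exact hbot')
end

section
/- Let h : C → D be a Boolean algebra homomorphism, {c_n : n ∈ ω} a countable partition of unity in C such that {h(c_n) : n ∈ ω} is a partition of unity in D. If (x_n)_{n∈ω} are elements of C such that the supremum s = ⋁_{n∈ω} x_n·c_n exists in C, then h(s) = ⋁_{n∈ω} h(x_n·c_n), with the supremum existing in D. -/
/-- Lemma 8.1: if `h : C → D` is a Boolean algebra homomorphism, `(c n)` is a countable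
partition of unity in `C` whose image is a partition of unity in `D`, and
`s = ⋁ₙ xₙ ⊓ cₙ` exists in `C`, then `h s = ⋁ₙ h (xₙ ⊓ cₙ)` (the supremum existing). -/
theorem hom_map_sup_of_partition {C D : Type u} [BooleanAlgebra C] [BooleanAlgebra D]
    (h : BoundedLatticeHom C D) (c : ℕ → C)
    (hdisj : Pairwise fun n m => c n ⊓ c m = ⊥)
    (hlub : IsLUB (Set.range c) ⊤)
    (hlubD : IsLUB (Set.range fun n => h (c n)) ⊤)
    (x : ℕ → C) (s : C)
    (hs : IsLUB (Set.range fun n => x n ⊓ c n) s) :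
    IsLUB (Set.range fun n => h (x n ⊓ c n)) (h s) := by
  have key : ∀ n, s ⊓ c n = x n ⊓ c n := by
    intro n
    apply le_antisymm
    · have hub : s ≤ (x n ⊓ c n) ⊔ (c n)ᶜ := by
        apply hs.2
        rintro _ ⟨m, rfl⟩
        rcases eq_or_ne m n with rfl | hmn
        · exact le_sup_left
        · have hcm : c m ≤ (c n)ᶜ :=
            le_compl_iff_disjoint_right.2 (disjoint_iff.2 (hdisj hmn))
          exact (inf_le_right.trans hcm).trans le_sup_right
      calc s ⊓ c n ≤ ((x n ⊓ c n) ⊔ (c n)ᶜ) ⊓ c n := inf_le_inf_right _ hub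
        _ = (x n ⊓ c n ⊓ c n) ⊔ ((c n)ᶜ ⊓ c n) := inf_sup_right _ _ _
        _ ≤ x n ⊓ c n := by simp [inf_assoc]
    · exact le_inf (hs.1 ⟨n, rfl⟩) inf_le_right
  constructor
  · rintro _ ⟨n, rfl⟩
    exact OrderHomClass.mono h (hs.1 ⟨n, rfl⟩)
  · rintro d hd
    have hn : ∀ n, h s ⊓ h (c n) ≤ d := by
      intro n
      rw [← map_inf, key n]
      exact hd ⟨n, rfl⟩
    have htop : (⊤ : D) ≤ (h s ⊓ dᶜ)ᶜ := by
      apply hlubD.2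
      rintro _ ⟨n, rfl⟩
      rw [le_compl_iff_disjoint_right]
      refine disjoint_iff.2 ?_
      have : h s ⊓ dᶜ ⊓ h (c n) ≤ d ⊓ dᶜ := by
        refine le_inf ?_ (inf_le_left.trans inf_le_right)
        calc h s ⊓ dᶜ ⊓ h (c n) ≤ h s ⊓ h (c n) := by
              exact inf_le_inf_right _ inf_le_left
          _ ≤ d := hn n
      rw [inf_comm]
      exact le_bot_iff.1 (this.trans (by simp))
    have : h s ⊓ dᶜ = ⊥ := by
      have := top_le_iff.1 htop
      rwa [compl_eq_top] at this
    rw [← sdiff_eq_bot_iff, sdiff_eq]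
    exact this
end

section
/- Let U be an infinite set, Fr(U) the free Boolean algebra on U with completion Ā. Suppose (s_n)_{n∈ω} are nonzero elements of Fr(U) whose supports are pairwise disjoint. Then ⋁_{n∈ω} s_n = 1 in Ā; consequently, setting d_n = s_n · ∏_{m<n} ¬s_m, the family {d_n : n ∈ ω} is a partition of unity in Ā. -/
section Aux

variable {Abar : Type u} [CompleteBooleanAlgebra Abar] {U : Type u} [DecidableEq U]
variable (u : U → Abar)

/-- The elementary product over `F` with positive part `T`. -/
def elemProd (F T : Finset U) : Abar :=
  T.inf u ⊓ (F \ T).inf fun i => (u i)ᶜ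

lemma elemProd_mono {F F' T' : Finset U} (hFF' : F ⊆ F') (hT' : T' ⊆ F') :
    elemProd u F' T' ≤ elemProd u F (T' ∩ F) := by
  refine inf_le_inf (Finset.inf_mono (Finset.inter_subset_left)) (Finset.inf_mono ?_)
  intro i hi
  rw [Finset.mem_sdiff] at hi ⊢
  refine ⟨hFF' hi.1, fun h => hi.2 (Finset.mem_inter.mpr ⟨h, hi.1⟩)⟩

lemma supAll (F : Finset U) : F.powerset.sup (elemProd u F) = ⊤ := by
  classical
  induction F using Finset.induction_on with
  | empty => simp [elemProd]
  | @insert a F ha ih =>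
    rw [eq_top_iff]
    calc (⊤ : Abar) = (u a ⊔ (u a)ᶜ) ⊓ F.powerset.sup (elemProd u F) := by
          rw [sup_compl_eq_top, ih, top_inf_eq]
      _ ≤ _ := by
          rw [inf_sup_right]
          apply sup_le
          · rw [Finset.sup_inf_distrib_left]
            apply Finset.sup_le
            intro T hT
            rw [Finset.mem_powerset] at hT
            have haT : a ∉ T := fun h => ha (hT h)
            have h1 : insert a T ∈ (insert a F).powerset := by
              rw [Finset.mem_powerset]; exact Finset.insert_subset_insert a hT
            refine le_trans ?_ (Finset.le_sup h1)
            have : insert a F \ insert a T = F \ T := by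
              ext x
              simp only [Finset.mem_sdiff, Finset.mem_insert]
              constructor
              · rintro ⟨h | h, h2⟩
                · exact absurd (Or.inl h) h2
                · exact ⟨h, fun hx => h2 (Or.inr hx)⟩
              · rintro ⟨hx1, hx2⟩
                refine ⟨Or.inr hx1, ?_⟩
                rintro (rfl | hx)
                · exact ha hx1
                · exact hx2 hx
            simp only [elemProd, this, Finset.inf_insert, inf_assoc]
            exact le_rfl
          · rw [Finset.sup_inf_distrib_left]
            apply Finset.sup_le
            intro T hT
            rw [Finset.mem_powerset] at hT
            have haT : a ∉ T := fun h => ha (hT h)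
            have h1 : T ∈ (insert a F).powerset := by
              rw [Finset.mem_powerset]; exact hT.trans (Finset.subset_insert a F)
            refine le_trans ?_ (Finset.le_sup h1)
            have : insert a F \ T = insert a (F \ T) := by
              ext x
              simp only [Finset.mem_sdiff, Finset.mem_insert]
              constructor
              · rintro ⟨h | h, h2⟩
                · exact Or.inl h
                · exact Or.inr ⟨h, h2⟩
              · rintro (rfl | ⟨h1, h2⟩)
                · exact ⟨Or.inl rfl, haT⟩
                · exact ⟨Or.inr h1, h2⟩
            simp only [elemProd, this, Finset.inf_insert]
            exact le_of_eq (inf_left_comm _ _ _)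

/-- `F` decides `a`: every elementary product over `F` is below `a` or below `aᶜ`. -/
def Decides (F : Finset U) (a : Abar) : Prop :=
  ∀ T ⊆ F, elemProd u F T ≤ a ∨ elemProd u F T ≤ aᶜ

lemma decides_mono {F F' : Finset U} {a : Abar} (h : Decides u F a) (hFF' : F ⊆ F') :
    Decides u F' a := by
  intro T hT
  rcases h (T ∩ F) Finset.inter_subset_right with h1 | h1
  · exact Or.inl ((elemProd_mono u hFF' hT).trans h1)
  · exact Or.inr ((elemProd_mono u hFF' hT).trans h1)

lemma exists_decides {A : Set U} {a : Abar} (h : BAGen (u '' A) a) :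
    ∃ F : Finset U, ↑F ⊆ A ∧ Decides u F a := by
  classical
  induction h with
  | @base a ha =>
    obtain ⟨i, hiA, rfl⟩ := ha
    refine ⟨{i}, by simpa using hiA, ?_⟩
    intro T hT
    rcases Finset.subset_singleton_iff.mp hT with rfl | rfl
    · right
      rw [elemProd]
      simp
    · left
      rw [elemProd]
      simp
  | bot =>
    refine ⟨∅, by simp, ?_⟩
    intro T hT
    right; simp
  | @sup a b _ _ iha ihb =>
    obtain ⟨F, hFA, hF⟩ := iha
    obtain ⟨G, hGA, hG⟩ := ihb
    refine ⟨F ∪ G, by simp [hFA, hGA, Set.union_subset], ?_⟩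
    have hF' := decides_mono u hF (Finset.subset_union_left (s₂ := G))
    have hG' := decides_mono u hG (Finset.subset_union_right (s₁ := F))
    intro T hT
    rcases hF' T hT with h1 | h1
    · exact Or.inl (h1.trans le_sup_left)
    · rcases hG' T hT with h2 | h2
      · exact Or.inl (h2.trans le_sup_right)
      · right
        rw [compl_sup]
        exact le_inf h1 h2
  | @compl a _ ih =>
    obtain ⟨F, hFA, hF⟩ := ih
    refine ⟨F, hFA, ?_⟩
    intro T hT
    rcases hF T hT with h1 | h1
    · right; rwa [compl_compl]
    · left; exact h1

lemma exists_elemProd_le {F : Finset U} {a : Abar} (hF : Decides u F a) (ha : a ≠ ⊥) :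
    ∃ T ⊆ F, elemProd u F T ≤ a := by
  by_contra h
  push_neg at h
  apply ha
  have : F.powerset.sup (elemProd u F) ≤ aᶜ := by
    apply Finset.sup_le
    intro T hT
    rw [Finset.mem_powerset] at hT
    rcases hF T hT with h1 | h1
    · exact absurd h1 (h T hT)
    · exact h1
  rw [supAll] at this
  have h2 : aᶜ = ⊤ := top_le_iff.mp this
  rw [← compl_compl a, h2, compl_top]

end Aux

/-- Step 8 of the proof of Theorem B: let `Ā` be the completion of the free Boolean
algebra `Fr(U)` on the infinite set `U` of independent generators `u`, realized as a
complete Boolean algebra in which `Fr(U) = ⟨range u⟩` is dense. If `(s n)` are nonzero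
elements of `Fr(U)` with pairwise disjoint supports, then `⋁ₙ s n = 1`, and with
`d n = s n ⊓ ⨅_{m<n} (s m)ᶜ`, the family `{d n}` is a partition of unity in `Ā`. -/
theorem sup_eq_top_of_disjoint_supports {Abar : Type u} [CompleteBooleanAlgebra Abar]
    {U : Type u} [Infinite U] (u : U → Abar)
    (hind : ∀ s t : Finset U, (∀ i ∈ s, i ∉ t) →
      s.inf u ⊓ t.inf (fun i => (u i)ᶜ) ≠ ⊥)
    (hdense : ∀ a : Abar, a ≠ ⊥ → ∃ f : Abar, BAGen (Set.range u) f ∧ ⊥ < f ∧ f ≤ a)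
    (s : ℕ → Abar) (hmem : ∀ n, BAGen (Set.range u) (s n)) (hne : ∀ n, s n ≠ ⊥)
    (hsupp : ∃ S : ℕ → Set U, Pairwise (Function.onFun Disjoint S) ∧
      ∀ n, BAGen (u '' S n) (s n)) :
    (⨆ n, s n) = ⊤ ∧
      (Pairwise fun n m => (s n ⊓ (Finset.range n).inf fun k => (s k)ᶜ) ⊓
        (s m ⊓ (Finset.range m).inf fun k => (s k)ᶜ) = ⊥) ∧
      (⨆ n, s n ⊓ (Finset.range n).inf fun k => (s k)ᶜ) = ⊤ := by
  classical
  obtain ⟨S, hSdisj, hSgen⟩ := hsupp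
  -- Part 1
  have part1 : (⨆ n, s n) = ⊤ := by
    by_contra htop
    have hc : (⨆ n, s n)ᶜ ≠ ⊥ := by
      simpa using htop
    obtain ⟨f, hfgen, hfpos, hfle⟩ := hdense _ hc
    rw [← Set.image_univ] at hfgen
    obtain ⟨F, -, hFdec⟩ := exists_decides u hfgen
    -- pick n with S n disjoint from F
    have hfin : {n : ℕ | ∃ i ∈ F, i ∈ S n}.Finite := by
      have : {n : ℕ | ∃ i ∈ F, i ∈ S n} ⊆ ⋃ i ∈ (↑F : Set U), {n | i ∈ S n} := by
        intro n hn
        obtain ⟨i, hiF, hiS⟩ := hn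
        exact Set.mem_biUnion hiF hiS
      refine Set.Finite.subset (Set.Finite.biUnion F.finite_toSet fun i _ => ?_) this
      apply Set.Subsingleton.finite
      intro n hn m hm
      by_contra hnm
      exact Set.disjoint_left.mp (hSdisj hnm) hn hm
    obtain ⟨n, hn⟩ := hfin.infinite_compl.nonempty
    have hFS : ∀ i ∈ F, i ∉ S n := fun i hi hiS => hn ⟨i, hi, hiS⟩
    obtain ⟨G, hGS, hGdec⟩ := exists_decides u (hSgen n)
    obtain ⟨T, hTF, hT⟩ := exists_elemProd_le u hFdec hfpos.ne'
    obtain ⟨T', hT'G, hT'⟩ := exists_elemProd_le u hGdec (hne n)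
    have hFG : ∀ i ∈ F, i ∉ G := fun i hi hiG => hFS i hi (hGS hiG)
    -- elementary product over F ∪ G
    have hTT' : T ∪ T' ⊆ F ∪ G := Finset.union_subset_union hTF hT'G
    have key : elemProd u (F ∪ G) (T ∪ T') ≤ f ⊓ s n := by
      refine le_inf ?_ ?_
      · have h1 := elemProd_mono u (Finset.subset_union_left (s₂ := G)) hTT'
        have : (T ∪ T') ∩ F = T := by
          apply Finset.Subset.antisymm
          · intro i hi
            rw [Finset.mem_inter, Finset.mem_union] at hi
            rcases hi.1 with h | h
            · exact h
            · exact absurd hi.2 (fun hh => hFG i hh (hT'G h))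
          · intro i hi
            exact Finset.mem_inter.mpr ⟨Finset.mem_union_left _ hi, hTF hi⟩
        rw [this] at h1
        exact h1.trans hT
      · have h1 := elemProd_mono u (Finset.subset_union_right (s₁ := F)) hTT'
        have : (T ∪ T') ∩ G = T' := by
          apply Finset.Subset.antisymm
          · intro i hi
            rw [Finset.mem_inter, Finset.mem_union] at hi
            rcases hi.1 with h | h
            · exact absurd hi.2 (hFG i (hTF h))
            · exact h
          · intro i hi
            exact Finset.mem_inter.mpr ⟨Finset.mem_union_right _ hi, hT'G hi⟩
        rw [this] at h1
        exact h1.trans hT'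
    have hne' : elemProd u (F ∪ G) (T ∪ T') ≠ ⊥ := by
      show (T ∪ T').inf u ⊓ ((F ∪ G) \ (T ∪ T')).inf (fun i => (u i)ᶜ) ≠ ⊥
      apply hind
      intro i hi
      rw [Finset.mem_sdiff]
      rintro ⟨-, h⟩
      exact h hi
    apply hne'
    rw [← le_bot_iff]
    refine key.trans ?_
    have : f ≤ (s n)ᶜ := hfle.trans (compl_le_compl (le_iSup s n))
    calc f ⊓ s n ≤ (s n)ᶜ ⊓ s n := inf_le_inf_right _ this
      _ = ⊥ := by rw [compl_inf_eq_bot]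
  refine ⟨part1, ?_, ?_⟩
  · -- pairwise disjoint d's
    have key : ∀ n m : ℕ, n < m →
        (s n ⊓ (Finset.range n).inf fun k => (s k)ᶜ) ⊓
        (s m ⊓ (Finset.range m).inf fun k => (s k)ᶜ) = ⊥ := by
      intro n m hnm
      rw [← le_bot_iff]
      have h1 : (s n ⊓ (Finset.range n).inf fun k => (s k)ᶜ) ≤ s n := inf_le_left
      have h2 : (s m ⊓ (Finset.range m).inf fun k => (s k)ᶜ) ≤ (s n)ᶜ :=
        inf_le_right.trans (Finset.inf_le (Finset.mem_range.mpr hnm))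
      calc _ ≤ s n ⊓ (s n)ᶜ := inf_le_inf h1 h2
        _ = ⊥ := inf_compl_eq_bot
    intro n m hnm
    rcases lt_or_gt_of_ne hnm with h | h
    · exact key n m h
    · rw [inf_comm]; exact key m n h
  · -- sup of d's is top
    rw [eq_top_iff, ← part1]
    apply iSup_le
    intro n
    induction n using Nat.strong_induction_on with
    | _ n ih =>
      have : s n ≤ (s n ⊓ (Finset.range n).inf fun k => (s k)ᶜ) ⊔ (Finset.range n).sup s := by
        have htop : ((Finset.range n).inf fun k => (s k)ᶜ) ⊔ (Finset.range n).sup s = ⊤ := by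
          rw [← Finset.compl_sup, compl_sup_eq_top]
        calc s n = s n ⊓ (((Finset.range n).inf fun k => (s k)ᶜ) ⊔ (Finset.range n).sup s) := by
              rw [htop, inf_top_eq]
          _ = (s n ⊓ (Finset.range n).inf fun k => (s k)ᶜ) ⊔ (s n ⊓ (Finset.range n).sup s) := by
              rw [inf_sup_left]
          _ ≤ _ := sup_le_sup_left inf_le_right _
      refine this.trans (sup_le (le_iSup (fun n => s n ⊓ (Finset.range n).inf fun k => (s k)ᶜ) n) ?_)
      apply Finset.sup_le
      intro k hk
      exact ih k (Finset.mem_range.mp hk)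
end
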